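/- Under the convexity and qualification assumptions, let (m₁,π,u,γ,P) be a solution of the system (MFG), and set w(t,x,·) = m₁(t,x)π(t,x,·) for all (t,x) ∈ 𝒯×S, m₂ = m₁, and D = A[w]. Then (m₁,w,m₂,D) is a solution of (𝔓) and (u,γ,P) is a solution of (𝔇); moreover (m₁,w) is a solution of (P̃), (m₁,π) is a solution of (P), and (γ,P) is a solution of (D̃). -/

import Mathlib

noncomputable section
open Finset Filter Topology Bornology
open scoped Classical Pointwise

/-- Fenchel conjugate of a function on a finite coordinate space. -/
def conjFn {d : Type*} [Fintype d] (g : (d → ℝ) → EReal) (y : d → ℝ) : EReal :=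
  ⨆ x : d → ℝ, (↑(∑ i, x i * y i) : EReal) - g x

/-- Fenchel conjugate, scalar case. -/
def conjR (g : ℝ → EReal) (y : ℝ) : EReal :=
  ⨆ x : ℝ, (↑(x * y) : EReal) - g x

/-- Subdifferential (empty where `g = ⊤`). -/
def subdiffFn {d : Type*} [Fintype d] (g : (d → ℝ) → EReal) (x : d → ℝ) : Set (d → ℝ) :=
  {p | g x ≠ ⊤ ∧ ∀ x', g x + (↑(∑ i, p i * (x' i - x i)) : EReal) ≤ g x'}

def subdiffR (g : ℝ → EReal) (x : ℝ) : Set ℝ :=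
  {p | g x ≠ ⊤ ∧ ∀ x', g x + (↑(p * (x' - x)) : EReal) ≤ g x'}

def EProper {E : Type*} (g : E → EReal) : Prop := (∃ x, g x ≠ ⊤) ∧ ∀ x, g x ≠ ⊥

def EConvexOn {E : Type*} [AddCommMonoid E] [SMul ℝ E] (g : E → EReal) : Prop :=
  ∀ x y : E, ∀ a b : ℝ, 0 ≤ a → 0 ≤ b → a + b = 1 →
    g (a • x + b • y) ≤ (a : EReal) * g x + (b : EReal) * g y

def EStrictConvexOn {E : Type*} [AddCommMonoid E] [SMul ℝ E] (g : E → EReal) : Prop :=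
  ∀ x y : E, x ≠ y → g x ≠ ⊤ → g y ≠ ⊤ → ∀ a b : ℝ, 0 < a → 0 < b → a + b = 1 →
    g (a • x + b • y) < (a : EReal) * g x + (b : EReal) * g y

/-- Perspective function. -/
def persp {d : Type*} [Fintype d] (h : (d → ℝ) → EReal) (θ : ℝ) (x : d → ℝ) : EReal :=
  if 0 < θ then (θ : EReal) * h (θ⁻¹ • x)
  else if θ = 0 ∧ x = 0 then 0 else ⊤

/-- The simplex `Δ(S)`. -/
def simplex (n : ℕ) : Set (Fin n → ℝ) :=
  {ρ | (∀ y, ρ y ∈ Set.Icc (0 : ℝ) 1) ∧ ∑ y, ρ y = 1}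

abbrev Msp (T n : ℕ) := Fin (T + 1) → Fin n → ℝ
abbrev Wsp (T n : ℕ) := Fin T → Fin n → Fin n → ℝ
abbrev Psp (T : ℕ) := Fin T → ℝ
abbrev Csp (T n : ℕ) := Msp T n × Wsp T n × Msp T n × Psp T
abbrev Ksp (T n : ℕ) := Msp T n × Msp T n × Psp T
abbrev LSp (T n : ℕ) := Fin T → Fin n → (Fin n → ℝ) → EReal
abbrev FSp (T n : ℕ) := Fin (T + 1) → (Fin n → ℝ) → EReal
abbrev PhiSp (T : ℕ) := Fin T → ℝ → EReal
abbrev ASp (T n : ℕ) := Fin T → Fin n → Fin n → ℝ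

variable {T n : ℕ}

def opA (α : ASp T n) (w : Wsp T n) (t : Fin T) : ℝ := ∑ x, ∑ y, w t x y * α t x y

def opS (w : Wsp T n) (s : Fin (T + 1)) (x : Fin n) : ℝ :=
  if h : (s : ℕ) = 0 then 0
  else ∑ y, w ⟨(s : ℕ) - 1, by have := s.isLt; omega⟩ y x

def mbar0 (m0 : Fin n → ℝ) (s : Fin (T + 1)) (x : Fin n) : ℝ := if s = 0 then m0 x else 0

def Qcpl (α : ASp T n) (m : Msp T n) (π : Wsp T n) (t : Fin T) : ℝ :=
  ∑ x, ∑ y, m t.castSucc x * π t x y * α t x y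

def IsKol (m0 : Fin n → ℝ) (π : Wsp T n) (m : Msp T n) : Prop :=
  (∀ x, m 0 x = m0 x) ∧
    ∀ (t : Fin T) (x : Fin n), m t.succ x = ∑ y, m t.castSucc y * π t y x

def InDelta (π : Wsp T n) : Prop := ∀ t x, π t x ∈ simplex n

def ConvAssumption (ℓ : LSp T n) (F : FSp T n) (φ : PhiSp T) : Prop :=
  (∀ t x, EProper (ℓ t x) ∧ EConvexOn (ℓ t x) ∧ LowerSemicontinuous (ℓ t x) ∧
    ∀ ρ, ℓ t x ρ ≠ ⊤ → ρ ∈ simplex n) ∧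
  (∀ s, EProper (F s) ∧ EConvexOn (F s) ∧ LowerSemicontinuous (F s)) ∧
  (∀ t, EProper (φ t) ∧ EConvexOn (φ t) ∧ LowerSemicontinuous (φ t))

def Jpot (ℓ : LSp T n) (F : FSp T n) (φ : PhiSp T) (α : ASp T n)
    (m : Msp T n) (π : Wsp T n) : EReal :=
  (∑ t, ∑ x, (↑(m t.castSucc x) : EReal) * ℓ t x (π t x)) +
    (∑ t, φ t (Qcpl α m π t)) + ∑ s, F s (m s)

def Jtil (ℓ : LSp T n) (F : FSp T n) (φ : PhiSp T) (α : ASp T n)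
    (m : Msp T n) (w : Wsp T n) : EReal :=
  (∑ t, ∑ x, persp (ℓ t x) (m t.castSucc x) (w t x)) +
    (∑ t, φ t (opA α w t)) + ∑ s, F s (m s)

def FeasP (m0 : Fin n → ℝ) (p : Msp T n × Wsp T n) : Prop := InDelta p.2 ∧ IsKol m0 p.2 p.1

def FeasPt (m0 : Fin n → ℝ) (p : Msp T n × Wsp T n) : Prop :=
  ∀ s x, opS p.2 s x - p.1 s x + mbar0 m0 s x = 0

def valP (ℓ : LSp T n) (F : FSp T n) (φ : PhiSp T) (α : ASp T n) (m0 : Fin n → ℝ) : EReal :=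
  ⨅ p ∈ {p : Msp T n × Wsp T n | FeasP m0 p}, Jpot ℓ F φ α p.1 p.2

def valPt (ℓ : LSp T n) (F : FSp T n) (φ : PhiSp T) (α : ASp T n) (m0 : Fin n → ℝ) : EReal :=
  ⨅ p ∈ {p : Msp T n × Wsp T n | FeasPt m0 p}, Jtil ℓ F φ α p.1 p.2

def IsSolP (ℓ : LSp T n) (F : FSp T n) (φ : PhiSp T) (α : ASp T n) (m0 : Fin n → ℝ)
    (p : Msp T n × Wsp T n) : Prop :=
  FeasP m0 p ∧ ∀ q, FeasP m0 q → Jpot ℓ F φ α p.1 p.2 ≤ Jpot ℓ F φ α q.1 q.2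

def IsSolPt (ℓ : LSp T n) (F : FSp T n) (φ : PhiSp T) (α : ASp T n) (m0 : Fin n → ℝ)
    (p : Msp T n × Wsp T n) : Prop :=
  FeasPt m0 p ∧ ∀ q, FeasPt m0 q → Jtil ℓ F φ α p.1 p.2 ≤ Jtil ℓ F φ α q.1 q.2

def dpCost (ℓ : LSp T n) (α : ASp T n) (u : Msp T n) (P : Psp T)
    (t : Fin T) (x : Fin n) : EReal :=
  conjFn (ℓ t x) (fun y => -(α t x y * P t + u t.succ y))

def FeasD (ℓ : LSp T n) (α : ASp T n) (k : Ksp T n) : Prop :=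
  (∀ t x, (↑(k.1 t.castSucc x) : EReal) + dpCost ℓ α k.1 k.2.2 t x ≤ ↑(k.2.1 t.castSucc x)) ∧
  ∀ x, k.1 (Fin.last T) x = k.2.1 (Fin.last T) x

def Dobj (F : FSp T n) (φ : PhiSp T) (m0 : Fin n → ℝ) (k : Ksp T n) : EReal :=
  (↑(∑ x, m0 x * k.1 0 x) : EReal) - (∑ t, conjR (φ t) (k.2.2 t)) -
    ∑ s, conjFn (F s) (k.2.1 s)

def valD (ℓ : LSp T n) (F : FSp T n) (φ : PhiSp T) (α : ASp T n) (m0 : Fin n → ℝ) : EReal :=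
  ⨆ k ∈ {k : Ksp T n | FeasD ℓ α k}, Dobj F φ m0 k

def IsSolD (ℓ : LSp T n) (F : FSp T n) (φ : PhiSp T) (α : ASp T n) (m0 : Fin n → ℝ)
    (k : Ksp T n) : Prop :=
  FeasD ℓ α k ∧ ∀ k', FeasD ℓ α k' → Dobj F φ m0 k' ≤ Dobj F φ m0 k

/-- `IsDP ℓ α γ P u` : `u = U[γ,P]`, i.e. `u` solves the dynamic programming equation. -/
def IsDP (ℓ : LSp T n) (α : ASp T n) (γ : Msp T n) (P : Psp T) (u : Msp T n) : Prop :=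
  (∀ (t : Fin T) (x : Fin n),
    (↑(u t.castSucc x) : EReal) + dpCost ℓ α u P t x = ↑(γ t.castSucc x)) ∧
  ∀ x, u (Fin.last T) x = γ (Fin.last T) x

def valDt (ℓ : LSp T n) (F : FSp T n) (φ : PhiSp T) (α : ASp T n) (m0 : Fin n → ℝ) : EReal :=
  ⨆ k ∈ {k : Ksp T n | IsDP ℓ α k.2.1 k.2.2 k.1}, Dobj F φ m0 k

def IsSolDt (ℓ : LSp T n) (F : FSp T n) (φ : PhiSp T) (α : ASp T n) (m0 : Fin n → ℝ)
    (γ : Msp T n) (P : Psp T) (u : Msp T n) : Prop :=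
  IsDP ℓ α γ P u ∧
    ∀ γ' P' u', IsDP ℓ α γ' P' u' → Dobj F φ m0 (u', γ', P') ≤ Dobj F φ m0 (u, γ, P)

def IsKolPert (m0 : Fin n → ℝ) (ε1 : Msp T n) (π : Wsp T n) (m1 : Msp T n) : Prop :=
  (∀ x, m1 0 x = mbar0 m0 (0 : Fin (T + 1)) x + ε1 0 x) ∧
  ∀ (t : Fin T) (x : Fin n), m1 t.succ x = (∑ y, m1 t.castSucc y * π t y x) - ε1 t.succ x

def qnorm (ε1 ε2 : Msp T n) (ε3 : Psp T) : ℝ :=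
  Real.sqrt ((∑ s, ∑ x, ε1 s x ^ 2) + (∑ s, ∑ x, ε2 s x ^ 2) + ∑ t, ε3 t ^ 2)

def Qualif (ℓ : LSp T n) (F : FSp T n) (φ : PhiSp T) (α : ASp T n) (m0 : Fin n → ℝ) : Prop :=
  ∃ α0 : ℝ, 0 < α0 ∧ ∀ (ε1 ε2 : Msp T n) (ε3 : Psp T), qnorm ε1 ε2 ε3 ≤ α0 →
    ∃ π : Wsp T n, (∀ t x, ℓ t x (π t x) ≠ ⊤) ∧
      ∃ m1 : Msp T n, IsKolPert m0 ε1 π m1 ∧ (∀ s x, 0 ≤ m1 s x) ∧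
        (∀ s, F s (fun x => m1 s x + ε2 s x) ≠ ⊤) ∧
        ∀ t, φ t (Qcpl α m1 π t + ε3 t) ≠ ⊤

def Fobj (ℓ : LSp T n) (F : FSp T n) (φ : PhiSp T) (c : Csp T n) : EReal :=
  (∑ t, ∑ x, persp (ℓ t x) (c.1 t.castSucc x) (c.2.1 t x)) +
    (∑ t, φ t (c.2.2.2 t)) + ∑ s, F s (c.2.2.1 s)

def Gobj (m0 : Fin n → ℝ) (k : Ksp T n) : EReal :=
  if (∀ s x, k.1 s x = -(mbar0 m0 s x)) ∧ k.2.1 = 0 ∧ k.2.2 = 0 then 0 else ⊤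

def Aop (α : ASp T n) (c : Csp T n) : Ksp T n :=
  (fun s x => opS c.2.1 s x - c.1 s x,
   fun s x => c.1 s x - c.2.2.1 s x,
   fun t => opA α c.2.1 t - c.2.2.2 t)

def AstarOp (α : ASp T n) (k : Ksp T n) : Csp T n :=
  (fun s x => k.2.1 s x - k.1 s x,
   fun t x y => α t x y * k.2.2 t + k.1 t.succ y,
   fun s x => -k.2.1 s x,
   fun t => -k.2.2 t)

def cpair (c c' : Csp T n) : ℝ :=
  (∑ s, ∑ x, c.1 s x * c'.1 s x) + (∑ t, ∑ x, ∑ y, c.2.1 t x y * c'.2.1 t x y) +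
    (∑ s, ∑ x, c.2.2.1 s x * c'.2.2.1 s x) + ∑ t, c.2.2.2 t * c'.2.2.2 t

def kpair (k k' : Ksp T n) : ℝ :=
  (∑ s, ∑ x, k.1 s x * k'.1 s x) + (∑ s, ∑ x, k.2.1 s x * k'.2.1 s x) +
    ∑ t, k.2.2 t * k'.2.2 t

def FobjStar (ℓ : LSp T n) (F : FSp T n) (φ : PhiSp T) (c' : Csp T n) : EReal :=
  ⨆ c : Csp T n, (↑(cpair c c') : EReal) - Fobj ℓ F φ c

def GobjStar (m0 : Fin n → ℝ) (k : Ksp T n) : EReal := ↑(-(∑ x, m0 x * k.1 0 x))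

def PfrakObj (ℓ : LSp T n) (F : FSp T n) (φ : PhiSp T) (α : ASp T n) (m0 : Fin n → ℝ)
    (c : Csp T n) : EReal := Fobj ℓ F φ c + Gobj m0 (Aop α c)

def DfrakObj (ℓ : LSp T n) (F : FSp T n) (φ : PhiSp T) (α : ASp T n) (m0 : Fin n → ℝ)
    (k : Ksp T n) : EReal := FobjStar ℓ F φ (-AstarOp α k) + GobjStar m0 k

def IsSolPfrak (ℓ : LSp T n) (F : FSp T n) (φ : PhiSp T) (α : ASp T n) (m0 : Fin n → ℝ)
    (c : Csp T n) : Prop := ∀ c', PfrakObj ℓ F φ α m0 c ≤ PfrakObj ℓ F φ α m0 c'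

def IsSolDfrak (ℓ : LSp T n) (F : FSp T n) (φ : PhiSp T) (α : ASp T n) (m0 : Fin n → ℝ)
    (k : Ksp T n) : Prop := ∀ k', DfrakObj ℓ F φ α m0 k ≤ DfrakObj ℓ F φ α m0 k'

def MFGi (ℓ : LSp T n) (α : ASp T n) (γ : Msp T n) (P : Psp T) (u : Msp T n) : Prop :=
  (∀ (t : Fin T) (x : Fin n), (↑(u t.castSucc x) : EReal) =
      ⨅ ρ ∈ simplex n,
        ℓ t x ρ + ↑(γ t.castSucc x) + ↑(∑ y, ρ y * (α t x y * P t + u t.succ y))) ∧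
  ∀ x, u (Fin.last T) x = γ (Fin.last T) x

def MFGii (ℓ : LSp T n) (α : ASp T n) (π : Wsp T n) (γ : Msp T n) (P : Psp T)
    (u : Msp T n) : Prop :=
  ∀ (t : Fin T) (x : Fin n),
    ℓ t x (π t x) + ↑(γ t.castSucc x) + ↑(∑ y, π t x y * (α t x y * P t + u t.succ y)) =
      (↑(u t.castSucc x) : EReal)

def IsMFGSol (ℓ : LSp T n) (F : FSp T n) (φ : PhiSp T) (α : ASp T n) (m0 : Fin n → ℝ)
    (m : Msp T n) (π : Wsp T n) (u : Msp T n) (γ : Msp T n) (P : Psp T) : Prop :=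
  InDelta π ∧ MFGi ℓ α γ P u ∧ MFGii ℓ α π γ P u ∧ IsKol m0 π m ∧
    (∀ s, γ s ∈ subdiffFn (F s) (m s)) ∧ ∀ t, P t ∈ subdiffR (φ t) (Qcpl α m π t)




lemma ereal_cases (x : EReal) : x = ⊥ ∨ x = ⊤ ∨ ∃ r : ℝ, x = (r : EReal) := by
  induction x using EReal.rec with
  | bot => exact Or.inl rfl
  | top => exact Or.inr (Or.inl rfl)
  | coe r => exact Or.inr (Or.inr ⟨r, rfl⟩)

lemma ecoe_sum {ι : Type*} (s : Finset ι) (f : ι → ℝ) :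
    ((∑ i ∈ s, f i : ℝ) : EReal) = ∑ i ∈ s, (f i : EReal) :=
  map_sum (⟨⟨(↑· : ℝ → EReal), EReal.coe_zero⟩, EReal.coe_add⟩ : ℝ →+ EReal) f s

lemma esum_ne_bot {ι : Type*} {s : Finset ι} {f : ι → EReal} (h : ∀ i ∈ s, f i ≠ ⊥) :
    ∑ i ∈ s, f i ≠ ⊥ := by
  classical
  refine Finset.sum_induction f (· ≠ ⊥) (fun a b ha hb => ?_) (by simp) h
  simp [EReal.add_eq_bot_iff, ha, hb]

lemma ecoe_le_add_of_sub_le {x : ℝ} {g s : EReal} (hg : g ≠ ⊥) (hs : s ≠ ⊥)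
    (h : (x : EReal) - g ≤ s) : (x : EReal) ≤ g + s := by
  rcases ereal_cases g with hgc | hgc | ⟨r, hgc⟩
  · exact absurd hgc hg
  · rw [hgc, EReal.top_add_of_ne_bot hs]; exact le_top
  · rcases ereal_cases s with hsc | hsc | ⟨q, hsc⟩
    · exact absurd hsc hs
    · rw [hsc, EReal.add_top_of_ne_bot (by rw [hgc]; simp)]; exact le_top
    · rw [hgc, hsc] at h ⊢
      rw [← EReal.coe_sub] at h
      rw [← EReal.coe_add]
      have : x - r ≤ q := by exact_mod_cast h
      exact_mod_cast by linarith

lemma ecoe_sub_le_of_le_add {x c : ℝ} {Y : EReal} (hY : Y ≠ ⊥)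
    (h : (x : EReal) ≤ Y + (c : EReal)) : ((x - c : ℝ) : EReal) ≤ Y := by
  rcases ereal_cases Y with hYc | hYc | ⟨r, hYc⟩
  · exact absurd hYc hY
  · rw [hYc]; exact le_top
  · rw [hYc] at h ⊢
    rw [← EReal.coe_add] at h
    have : x ≤ r + c := by exact_mod_cast h
    exact_mod_cast by linarith

lemma ecoe_sub_le_of_le_add' {x : ℝ} {Y c : EReal} (hY : Y ≠ ⊥)
    (h : (x : EReal) ≤ Y + c) : (x : EReal) - Y ≤ c := by
  rcases ereal_cases Y with hYc | hYc | ⟨r, hYc⟩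
  · exact absurd hYc hY
  · rw [hYc]; simp [EReal.sub_top]
  · rcases ereal_cases c with hcc | hcc | ⟨q, hcc⟩
    · rw [hcc, EReal.add_bot] at h; exact absurd h (by simp)
    · rw [hcc]; exact le_top
    · rw [hYc, hcc] at h ⊢
      rw [← EReal.coe_add] at h
      rw [← EReal.coe_sub]
      have : x ≤ r + q := by exact_mod_cast h
      exact_mod_cast by linarith

lemma conjFn_ge {d : Type*} [Fintype d] (g : (d → ℝ) → EReal) (y x : d → ℝ) :
    (↑(∑ i, x i * y i) : EReal) - g x ≤ conjFn g y :=
  le_iSup (fun x => (↑(∑ i, x i * y i) : EReal) - g x) x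

lemma conjR_ge (g : ℝ → EReal) (y x : ℝ) :
    (↑(x * y) : EReal) - g x ≤ conjR g y :=
  le_iSup (fun x => (↑(x * y) : EReal) - g x) x

lemma conjFn_ne_bot {d : Type*} [Fintype d] {g : (d → ℝ) → EReal} (hp : EProper g)
    (y : d → ℝ) : conjFn g y ≠ ⊥ := by
  obtain ⟨⟨x0, hx0⟩, hbot⟩ := hp
  have h1 := conjFn_ge g y x0
  intro hc
  rw [hc, le_bot_iff] at h1
  rcases ereal_cases (g x0) with hg | hg | ⟨r, hg⟩
  · exact hbot x0 hg
  · exact hx0 hg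
  · rw [hg, ← EReal.coe_sub] at h1; exact EReal.coe_ne_bot _ h1

lemma conjR_ne_bot {g : ℝ → EReal} (hp : EProper g) (y : ℝ) : conjR g y ≠ ⊥ := by
  obtain ⟨⟨x0, hx0⟩, hbot⟩ := hp
  have h1 := conjR_ge g y x0
  intro hc
  rw [hc, le_bot_iff] at h1
  rcases ereal_cases (g x0) with hg | hg | ⟨r, hg⟩
  · exact hbot x0 hg
  · exact hx0 hg
  · rw [hg, ← EReal.coe_sub] at h1; exact EReal.coe_ne_bot _ h1

/-- Fenchel equality at a subgradient, vector case. -/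
lemma conjFn_eq_of_subdiff {d : Type*} [Fintype d] {g : (d → ℝ) → EReal} {x p : d → ℝ}
    (hbot : ∀ z, g z ≠ ⊥) (hp : p ∈ subdiffFn g x) :
    ∃ gx : ℝ, g x = (gx : EReal) ∧ conjFn g p = ↑(∑ i, x i * p i - gx) := by
  obtain ⟨hne, hsub⟩ := hp
  obtain ⟨gx, hgx⟩ : ∃ r : ℝ, g x = (r : EReal) :=
    ⟨(g x).toReal, (EReal.coe_toReal hne (hbot x)).symm⟩
  refine ⟨gx, hgx, le_antisymm (iSup_le fun x' => ?_) ?_⟩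
  · have h2 := hsub x'
    rw [hgx] at h2
    rcases ereal_cases (g x') with hg' | hg' | ⟨r, hg'⟩
    · exact absurd hg' (hbot x')
    · rw [hg', EReal.sub_top]; exact bot_le
    · rw [hg'] at h2 ⊢
      rw [← EReal.coe_add] at h2
      rw [← EReal.coe_sub, EReal.coe_le_coe_iff]
      have h3 : gx + ∑ i, p i * (x' i - x i) ≤ r := by exact_mod_cast h2
      have h4 : ∑ i, p i * (x' i - x i) = ∑ i, x' i * p i - ∑ i, x i * p i := by
        rw [← Finset.sum_sub_distrib]; congr 1; funext i; ring
      linarith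
  · have h5 := conjFn_ge g p x
    rwa [hgx, ← EReal.coe_sub] at h5

/-- Fenchel equality at a subgradient, scalar case. -/
lemma conjR_eq_of_subdiff {g : ℝ → EReal} {x p : ℝ}
    (hbot : ∀ z, g z ≠ ⊥) (hp : p ∈ subdiffR g x) :
    ∃ gx : ℝ, g x = (gx : EReal) ∧ conjR g p = ↑(x * p - gx) := by
  obtain ⟨hne, hsub⟩ := hp
  obtain ⟨gx, hgx⟩ : ∃ r : ℝ, g x = (r : EReal) :=
    ⟨(g x).toReal, (EReal.coe_toReal hne (hbot x)).symm⟩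
  refine ⟨gx, hgx, le_antisymm (iSup_le fun x' => ?_) ?_⟩
  · have h2 := hsub x'
    rw [hgx] at h2
    rcases ereal_cases (g x') with hg' | hg' | ⟨r, hg'⟩
    · exact absurd hg' (hbot x')
    · rw [hg', EReal.sub_top]; exact bot_le
    · rw [hg'] at h2 ⊢
      rw [← EReal.coe_add] at h2
      rw [← EReal.coe_sub, EReal.coe_le_coe_iff]
      have h3 : gx + p * (x' - x) ≤ r := by exact_mod_cast h2
      nlinarith
  · have h5 := conjR_ge g p x
    rwa [hgx, ← EReal.coe_sub] at h5

lemma persp_ne_bot {d : Type*} [Fintype d] {h : (d → ℝ) → EReal} (hbot : ∀ z, h z ≠ ⊥)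
    (θ : ℝ) (x : d → ℝ) : persp h θ x ≠ ⊥ := by
  unfold persp
  split_ifs with h1 h2
  · rcases ereal_cases (h (θ⁻¹ • x)) with hg | hg | ⟨r, hg⟩
    · exact absurd hg (hbot _)
    · rw [hg, EReal.coe_mul_top_of_pos h1]; simp
    · rw [hg, ← EReal.coe_mul]; exact EReal.coe_ne_bot _
  · simp
  · simp

lemma persp_smul {d : Type*} [Fintype d] (h : (d → ℝ) → EReal) {θ : ℝ} (hθ : 0 ≤ θ)
    (ρ : d → ℝ) : persp h θ (θ • ρ) = (θ : EReal) * h ρ := by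
  unfold persp
  rcases lt_or_eq_of_le hθ with hpos | hzero
  · rw [if_pos hpos, smul_smul, inv_mul_cancel₀ hpos.ne', one_smul]
  · rw [if_neg (by rw [← hzero]; exact lt_irrefl 0), ← hzero]
    simp

/-- Lower bound for the perspective from a conjugate bound. -/
lemma persp_ge {d : Type*} [Fintype d] {h : (d → ℝ) → EReal} (hbot : ∀ z, h z ≠ ⊥)
    {a : ℝ} {b : d → ℝ} (hc : conjFn h b ≤ ((-a : ℝ) : EReal)) (θ : ℝ) (x : d → ℝ) :
    (↑(θ * a + ∑ i, x i * b i) : EReal) ≤ persp h θ x := by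
  unfold persp
  split_ifs with h1 h2
  · have key := le_trans (conjFn_ge h b (θ⁻¹ • x)) hc
    rcases ereal_cases (h (θ⁻¹ • x)) with hg | hg | ⟨r, hg⟩
    · exact absurd hg (hbot _)
    · rw [hg, EReal.coe_mul_top_of_pos h1]; exact le_top
    · rw [hg] at key ⊢
      rw [← EReal.coe_sub, EReal.coe_le_coe_iff] at key
      rw [← EReal.coe_mul, EReal.coe_le_coe_iff]
      have hsum : ∑ i, (θ⁻¹ • x) i * b i = θ⁻¹ * ∑ i, x i * b i := by
        rw [Finset.mul_sum]; congr 1; funext i; simp [smul_eq_mul]; ring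
      rw [hsum] at key
      have h5 : θ * (θ⁻¹ * ∑ i, x i * b i - r) ≤ θ * (-a) :=
        mul_le_mul_of_nonneg_left (by linarith) h1.le
      have h6 : θ * (θ⁻¹ * ∑ i, x i * b i) = ∑ i, x i * b i := by
        field_simp
      nlinarith [h5, h6]
  · obtain ⟨hθ0, hx0⟩ := h2
    simp [hθ0, hx0]
  · exact le_top


-- ### auxiliary lemmas about the operators

lemma opS_zero (w : Wsp T n) (x : Fin n) : opS w 0 x = 0 := by
  unfold opS; rw [dif_pos (by simp)]

lemma opS_succ (w : Wsp T n) (t : Fin T) (x : Fin n) : opS w t.succ x = ∑ y, w t y x := by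
  unfold opS
  rw [dif_neg (by simp [Fin.val_succ])]
  simp only [Fin.val_succ, Nat.add_sub_cancel, Fin.eta]

lemma opS_pair (w : Wsp T n) (v : Msp T n) :
    ∑ s, ∑ x, opS w s x * v s x = ∑ t, ∑ x, ∑ y, w t x y * v t.succ y := by
  rw [Fin.sum_univ_succ (f := fun s : Fin (T+1) => ∑ x, opS w s x * v s x)]
  have h0 : ∑ x, opS w 0 x * v 0 x = 0 :=
    Finset.sum_eq_zero fun x _ => by rw [opS_zero]; ring
  rw [h0, zero_add]
  apply Finset.sum_congr rfl; intro t _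
  calc ∑ x, opS w t.succ x * v t.succ x
      = ∑ x, ∑ y, w t y x * v t.succ x := by
        apply Finset.sum_congr rfl; intro x _; rw [opS_succ, Finset.sum_mul]
    _ = ∑ y, ∑ x, w t y x * v t.succ x := Finset.sum_comm

lemma kol_nonneg (m0 : Fin n → ℝ) (hm0 : m0 ∈ simplex n) (π : Wsp T n) (hπ : InDelta π)
    (m : Msp T n) (hK : IsKol m0 π m) : ∀ s x, 0 ≤ m s x := by
  have key : ∀ k : ℕ, ∀ hk : k < T + 1, ∀ x, 0 ≤ m ⟨k, hk⟩ x := by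
    intro k
    induction k with
    | zero =>
      intro hk x
      have h0 : (⟨0, hk⟩ : Fin (T+1)) = 0 := rfl
      rw [h0, hK.1 x]; exact (hm0.1 x).1
    | succ k ih =>
      intro hk x
      have hkT : k < T := by omega
      have h1 : (⟨k+1, hk⟩ : Fin (T+1)) = (⟨k, hkT⟩ : Fin T).succ := rfl
      rw [h1, hK.2 ⟨k, hkT⟩ x]
      apply Finset.sum_nonneg; intro y _
      have h2 : (⟨k, hkT⟩ : Fin T).castSucc = (⟨k, by omega⟩ : Fin (T+1)) := rfl
      exact mul_nonneg (h2 ▸ ih (by omega) y) ((hπ ⟨k, hkT⟩ y).1 x).1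
  intro s x
  have := key s.1 s.2 x
  simpa using this

lemma kol_opS {m0 : Fin n → ℝ} {π' : Wsp T n} {m' : Msp T n} {w' : Wsp T n}
    (hw' : ∀ t x y, w' t x y = m' t.castSucc x * π' t x y) (hK : IsKol m0 π' m') :
    ∀ (s : Fin (T+1)) (x : Fin n), opS w' s x - m' s x = -(mbar0 m0 s x) := by
  intro s x
  induction s using Fin.cases with
  | zero =>
    rw [opS_zero, hK.1 x]
    unfold mbar0; rw [if_pos rfl]; ring
  | succ t =>
    rw [opS_succ]
    unfold mbar0; rw [if_neg (Fin.succ_ne_zero t)]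
    have h1 : ∑ y, w' t y x = m' t.succ x := by
      rw [hK.2 t x]
      exact Finset.sum_congr rfl fun y _ => hw' t y x
    rw [h1]; ring


/-- Proposition 1: from a solution of the MFG system one obtains
solutions of (𝔓), (𝔇), (P̃), (P) and (D̃). -/
theorem mfg_to_potential {T n : ℕ} (hT : 1 ≤ T) (hn : 1 ≤ n)
    (ℓ : LSp T n) (F : FSp T n) (φ : PhiSp T) (α : ASp T n)
    (m0 : Fin n → ℝ) (hm0 : m0 ∈ simplex n)
    (hconv : ConvAssumption ℓ F φ) (hqual : Qualif ℓ F φ α m0)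
    (m : Msp T n) (π : Wsp T n) (u γ : Msp T n) (P : Psp T)
    (hsol : IsMFGSol ℓ F φ α m0 m π u γ P)
    (w : Wsp T n) (hw : ∀ t x y, w t x y = m t.castSucc x * π t x y)
    (D : Psp T) (hD : ∀ t, D t = opA α w t) :
    IsSolPfrak ℓ F φ α m0 (m, w, m, D) ∧
    IsSolDfrak ℓ F φ α m0 (u, γ, P) ∧
    IsSolPt ℓ F φ α m0 (m, w) ∧
    IsSolP ℓ F φ α m0 (m, π) ∧
    IsSolDt ℓ F φ α m0 γ P u := by
  obtain ⟨hπΔ, hMi, hMii, hKol, hγF, hPφ⟩ := hsol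
  obtain ⟨hℓa, hFa, hφa⟩ := hconv
  have hbotℓ : ∀ (t : Fin T) (x : Fin n) ρ, ℓ t x ρ ≠ ⊥ := fun t x => (hℓa t x).1.2
  have hdom : ∀ (t : Fin T) (x : Fin n) ρ, ℓ t x ρ ≠ ⊤ → ρ ∈ simplex n :=
    fun t x => (hℓa t x).2.2.2
  have hpropF : ∀ s, EProper (F s) := fun s => (hFa s).1
  have hbotF : ∀ s z, F s z ≠ ⊥ := fun s => (hpropF s).2
  have hpropφ : ∀ t, EProper (φ t) := fun t => (hφa t).1
  have hbotφ : ∀ t z, φ t z ≠ ⊥ := fun t => (hpropφ t).2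
  -- conjugate inequality from the MFG value function
  have hconj_le : ∀ (t : Fin T) (x : Fin n),
      conjFn (ℓ t x) (fun y => -(α t x y * P t + u t.succ y))
        ≤ ((γ t.castSucc x - u t.castSucc x : ℝ) : EReal) := by
    intro t x
    apply iSup_le; intro ρ
    rcases ereal_cases (ℓ t x ρ) with hc | hc | ⟨L, hc⟩
    · exact absurd hc (hbotℓ t x ρ)
    · rw [hc, EReal.sub_top]; exact bot_le
    · have hρΔ : ρ ∈ simplex n := hdom t x ρ (by rw [hc]; exact EReal.coe_ne_top L)
      have h1 : (↑(u t.castSucc x) : EReal)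
          ≤ ℓ t x ρ + ↑(γ t.castSucc x) + ↑(∑ y, ρ y * (α t x y * P t + u t.succ y)) := by
        rw [hMi.1 t x]
        exact iInf₂_le ρ hρΔ
      rw [hc, ← EReal.coe_add, ← EReal.coe_add] at h1
      have h2 : u t.castSucc x ≤ L + γ t.castSucc x + ∑ y, ρ y * (α t x y * P t + u t.succ y) := by
        exact_mod_cast h1
      rw [hc, ← EReal.coe_sub, EReal.coe_le_coe_iff]
      have h3 : ∑ y, ρ y * -(α t x y * P t + u t.succ y)
          = -∑ y, ρ y * (α t x y * P t + u t.succ y) := by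
        simp only [mul_neg]; exact Finset.sum_neg_distrib _
      rw [h3]; linarith
  have hLreal : ∀ (t : Fin T) (x : Fin n), ℓ t x (π t x)
      = ((u t.castSucc x - γ t.castSucc x
          - ∑ y, π t x y * (α t x y * P t + u t.succ y) : ℝ) : EReal) := by
    intro t x
    have h1 := hMii t x
    rcases ereal_cases (ℓ t x (π t x)) with hc | hc | ⟨L, hc⟩
    · exact absurd hc (hbotℓ t x _)
    · rw [hc, EReal.top_add_of_ne_bot (EReal.coe_ne_bot _),
        EReal.top_add_of_ne_bot (EReal.coe_ne_bot _)] at h1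
      exact absurd h1.symm (EReal.coe_ne_top _)
    · rw [hc, ← EReal.coe_add, ← EReal.coe_add] at h1
      rw [hc, EReal.coe_eq_coe_iff]
      have h2 : L + γ t.castSucc x + ∑ y, π t x y * (α t x y * P t + u t.succ y)
          = u t.castSucc x := EReal.coe_eq_coe_iff.mp h1
      linarith
  have hconj_eq : ∀ (t : Fin T) (x : Fin n),
      conjFn (ℓ t x) (fun y => -(α t x y * P t + u t.succ y))
        = ((γ t.castSucc x - u t.castSucc x : ℝ) : EReal) := by
    intro t x
    refine le_antisymm (hconj_le t x) ?_
    have h1 := conjFn_ge (ℓ t x) (fun y => -(α t x y * P t + u t.succ y)) (π t x)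
    rw [hLreal t x, ← EReal.coe_sub] at h1
    refine le_trans (le_of_eq ?_) h1
    rw [EReal.coe_eq_coe_iff]
    have h3 : ∑ y, π t x y * -(α t x y * P t + u t.succ y)
        = -∑ y, π t x y * (α t x y * P t + u t.succ y) := by
      simp only [mul_neg]; exact Finset.sum_neg_distrib _
    rw [h3]; ring
  have hIsDP : IsDP ℓ α γ P u := by
    constructor
    · intro t x
      show (↑(u t.castSucc x) : EReal)
          + conjFn (ℓ t x) (fun y => -(α t x y * P t + u t.succ y)) = ↑(γ t.castSucc x)
      rw [hconj_eq t x, ← EReal.coe_add]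
      exact congrArg _ (by ring)
    · exact hMi.2
  -- choose real values of φ, F at the solution via subdifferentials
  choose qφ hqφ using fun t => conjR_eq_of_subdiff (hbotφ t) (hPφ t)
  choose fF hfF using fun s => conjFn_eq_of_subdiff (hbotF s) (hγF s)
  set RL : ℝ := ∑ t, ∑ x, m t.castSucc x * (u t.castSucc x - γ t.castSucc x
      - ∑ y, π t x y * (α t x y * P t + u t.succ y)) with hRLdef
  set X0 : ℝ := ∑ x, m0 x * u 0 x with hX0def
  set A1 : ℝ := ∑ t, (Qcpl α m π t * P t - qφ t) with hA1def
  set A2 : ℝ := ∑ s, (∑ x, m s x * γ s x - fF s) with hA2def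
  set R : ℝ := RL + (∑ t, qφ t) + ∑ s, fF s with hRdef
  have hcq : (∑ t, conjR (φ t) (P t)) = ((A1 : ℝ) : EReal) := by
    rw [hA1def, ecoe_sum]; exact Finset.sum_congr rfl fun t _ => (hqφ t).2
  have hcf : (∑ s, conjFn (F s) (γ s)) = ((A2 : ℝ) : EReal) := by
    rw [hA2def, ecoe_sum]; exact Finset.sum_congr rfl fun s _ => (hfF s).2
  -- the fundamental summation-by-parts identity
  have hSI : RL = X0 - (∑ t, P t * Qcpl α m π t) - ∑ s, ∑ x, m s x * γ s x := by
    rw [hRLdef, hX0def]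
    have e1 : ∀ t : Fin T, ∑ x, m t.castSucc x * (∑ y, π t x y * (α t x y * P t + u t.succ y))
        = P t * Qcpl α m π t + ∑ y, m t.succ y * u t.succ y := by
      intro t
      have e1a : ∑ x, m t.castSucc x * (∑ y, π t x y * (α t x y * P t + u t.succ y))
          = (∑ x, ∑ y, m t.castSucc x * π t x y * α t x y * P t)
            + ∑ x, ∑ y, m t.castSucc x * π t x y * u t.succ y := by
        rw [← Finset.sum_add_distrib]
        apply Finset.sum_congr rfl; intro x _
        rw [Finset.mul_sum, ← Finset.sum_add_distrib]
        exact Finset.sum_congr rfl fun y _ => by ring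
      have e1b : ∑ x, ∑ y, m t.castSucc x * π t x y * u t.succ y
          = ∑ y, m t.succ y * u t.succ y := by
        rw [Finset.sum_comm]
        apply Finset.sum_congr rfl; intro y _
        rw [hKol.2 t y, Finset.sum_mul]
      have e1c : ∑ x, ∑ y, m t.castSucc x * π t x y * α t x y * P t
          = P t * Qcpl α m π t := by
        unfold Qcpl
        rw [Finset.mul_sum]
        apply Finset.sum_congr rfl; intro x _
        rw [Finset.mul_sum]
        exact Finset.sum_congr rfl fun y _ => by ring
      rw [e1a, e1b, e1c]
    have e3 : ∀ t : Fin T, ∑ x, m t.castSucc x * (u t.castSucc x - γ t.castSucc x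
        - ∑ y, π t x y * (α t x y * P t + u t.succ y))
        = (∑ x, m t.castSucc x * u t.castSucc x) - (∑ x, m t.castSucc x * γ t.castSucc x)
          - (P t * Qcpl α m π t + ∑ y, m t.succ y * u t.succ y) := by
      intro t
      rw [← e1 t, ← Finset.sum_sub_distrib, ← Finset.sum_sub_distrib]
      exact Finset.sum_congr rfl fun x _ => by ring
    rw [Finset.sum_congr rfl fun t (_ : t ∈ Finset.univ) => e3 t]
    rw [Finset.sum_sub_distrib, Finset.sum_sub_distrib, Finset.sum_add_distrib]
    have h1 := Fin.sum_univ_castSucc (f := fun s : Fin (T+1) => ∑ x, m s x * u s x)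
    have h2 := Fin.sum_univ_succ (f := fun s : Fin (T+1) => ∑ x, m s x * u s x)
    have h3 := Fin.sum_univ_castSucc (f := fun s : Fin (T+1) => ∑ x, m s x * γ s x)
    have h4 : ∑ x, m (Fin.last T) x * u (Fin.last T) x
        = ∑ x, m (Fin.last T) x * γ (Fin.last T) x :=
      Finset.sum_congr rfl fun x _ => by rw [hMi.2 x]
    have h5 : ∑ x, m 0 x * u 0 x = ∑ x, m0 x * u 0 x :=
      Finset.sum_congr rfl fun x _ => by rw [hKol.1 x]
    linarith [h1, h2, h3, h4, h5]
  have hsub1 : ∑ t, (Qcpl α m π t * P t - qφ t)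
      = (∑ t, Qcpl α m π t * P t) - ∑ t, qφ t := Finset.sum_sub_distrib _ _
  have hsub2 : ∑ s, (∑ x, m s x * γ s x - fF s)
      = (∑ s, ∑ x, m s x * γ s x) - ∑ s, fF s := Finset.sum_sub_distrib _ _
  have hcomm : ∑ t, Qcpl α m π t * P t = ∑ t, P t * Qcpl α m π t :=
    Finset.sum_congr rfl fun t _ => mul_comm _ _
  -- expansion of the pairing
  have hexp : ∀ (m1 : Msp T n) (w1 : Wsp T n) (m2 : Msp T n) (D1 : Psp T)
      (u1 γ1 : Msp T n) (P1 : Psp T),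
      cpair (m1, w1, m2, D1) (-AstarOp α (u1, γ1, P1))
        = (∑ s, ∑ x, m1 s x * (u1 s x - γ1 s x))
          + (∑ t, ∑ x, ∑ y, w1 t x y * -(α t x y * P1 t + u1 t.succ y))
          + (∑ s, ∑ x, m2 s x * γ1 s x) + ∑ t, D1 t * P1 t := by
    intro m1 w1 m2 D1 u1 γ1 P1
    show (∑ s, ∑ x, m1 s x * -(γ1 s x - u1 s x))
        + (∑ t, ∑ x, ∑ y, w1 t x y * -(α t x y * P1 t + u1 t.succ y))
        + (∑ s, ∑ x, m2 s x * - -γ1 s x) + ∑ t, D1 t * - -P1 t = _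
    refine congrArg₂ (· + ·) (congrArg₂ (· + ·) (congrArg₂ (· + ·) ?_ rfl) ?_) ?_
    · exact Finset.sum_congr rfl fun s _ => Finset.sum_congr rfl fun x _ => by ring
    · exact Finset.sum_congr rfl fun s _ => Finset.sum_congr rfl fun x _ => by ring
    · exact Finset.sum_congr rfl fun t _ => by ring
  -- the adjoint identity on the constraint set
  have hadj : ∀ (m1 : Msp T n) (w1 : Wsp T n) (m2 : Msp T n) (D1 : Psp T)
      (u1 γ1 : Msp T n) (P1 : Psp T),
      (∀ s x, opS w1 s x - m1 s x = -(mbar0 m0 s x)) → (∀ s x, m1 s x = m2 s x) →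
      (∀ t, opA α w1 t = D1 t) →
      cpair (m1, w1, m2, D1) (-AstarOp α (u1, γ1, P1)) = ∑ x, m0 x * u1 0 x := by
    intro m1 w1 m2 D1 u1 γ1 P1 h1 h2 h3
    rw [hexp m1 w1 m2 D1 u1 γ1 P1]
    have hA : ∑ t, opA α w1 t * P1 t = ∑ t, ∑ x, ∑ y, w1 t x y * α t x y * P1 t := by
      apply Finset.sum_congr rfl; intro t _
      unfold opA; rw [Finset.sum_mul]
      exact Finset.sum_congr rfl fun x _ => Finset.sum_mul _ _ _
    have e2 : (∑ t, ∑ x, ∑ y, w1 t x y * -(α t x y * P1 t + u1 t.succ y))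
        = -(∑ t, opA α w1 t * P1 t) - ∑ s, ∑ x, opS w1 s x * u1 s x := by
      rw [opS_pair w1 u1, hA]
      calc ∑ t, ∑ x, ∑ y, w1 t x y * -(α t x y * P1 t + u1 t.succ y)
          = ∑ t, ∑ x, ∑ y, (-(w1 t x y * α t x y * P1 t) - w1 t x y * u1 t.succ y) :=
            Finset.sum_congr rfl fun t _ => Finset.sum_congr rfl fun x _ =>
              Finset.sum_congr rfl fun y _ => by ring
        _ = _ := by simp only [Finset.sum_sub_distrib, Finset.sum_neg_distrib]
    rw [e2]
    have hT4 : ∑ t, D1 t * P1 t = ∑ t, opA α w1 t * P1 t :=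
      Finset.sum_congr rfl fun t _ => by rw [h3 t]
    have hT3 : ∑ s, ∑ x, m2 s x * γ1 s x = ∑ s, ∑ x, m1 s x * γ1 s x :=
      Finset.sum_congr rfl fun s _ => Finset.sum_congr rfl fun x _ => by rw [h2 s x]
    have hopS : ∑ s, ∑ x, opS w1 s x * u1 s x
        = ∑ s, ∑ x, (m1 s x - mbar0 m0 s x) * u1 s x :=
      Finset.sum_congr rfl fun s _ => Finset.sum_congr rfl fun x _ => by
        have h4 := h1 s x
        have h5 : opS w1 s x = m1 s x - mbar0 m0 s x := by linarith
        rw [h5]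
    rw [hT4, hT3, hopS]
    have key : (∑ s, ∑ x, m1 s x * (u1 s x - γ1 s x))
        - (∑ s, ∑ x, (m1 s x - mbar0 m0 s x) * u1 s x)
        + (∑ s, ∑ x, m1 s x * γ1 s x) = ∑ s, ∑ x, mbar0 m0 s x * u1 s x := by
      rw [← Finset.sum_sub_distrib, ← Finset.sum_add_distrib]
      apply Finset.sum_congr rfl; intro s _
      rw [← Finset.sum_sub_distrib, ← Finset.sum_add_distrib]
      exact Finset.sum_congr rfl fun x _ => by ring
    have last : ∑ s, ∑ x, mbar0 m0 s x * u1 s x = ∑ x, m0 x * u1 0 x := by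
      rw [Fin.sum_univ_succ (f := fun s : Fin (T+1) => ∑ x, mbar0 m0 s x * u1 s x)]
      have hz : ∀ t : Fin T, ∑ x, mbar0 m0 t.succ x * u1 t.succ x = 0 := by
        intro t; apply Finset.sum_eq_zero; intro x _
        unfold mbar0; rw [if_neg (Fin.succ_ne_zero t)]; ring
      rw [Finset.sum_congr rfl fun t (_ : t ∈ Finset.univ) => hz t]
      unfold mbar0
      simp
    linarith [key, last]
  -- THE MASTER INEQUALITY
  have master : ∀ (u' γ' : Msp T n) (P' : Psp T), IsDP ℓ α γ' P' u' →
      ∀ c : Csp T n, (↑(cpair c (-AstarOp α (u', γ', P'))) : EReal)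
        ≤ Fobj ℓ F φ c + (∑ t, conjR (φ t) (P' t)) + ∑ s, conjFn (F s) (γ' s) := by
    intro u' γ' P' hDP c
    obtain ⟨m1, w1, m2, D1⟩ := c
    have hconj' : ∀ (t : Fin T) (x : Fin n),
        conjFn (ℓ t x) (fun y => -(α t x y * P' t + u' t.succ y))
          = ((γ' t.castSucc x - u' t.castSucc x : ℝ) : EReal) := by
      intro t x
      have h1 := hDP.1 t x
      rcases ereal_cases (dpCost ℓ α u' P' t x) with hc | hc | ⟨r, hc⟩
      · rw [hc, EReal.add_bot] at h1; exact absurd h1.symm (EReal.coe_ne_bot _)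
      · rw [hc, EReal.add_top_of_ne_bot (EReal.coe_ne_bot _)] at h1
        exact absurd h1.symm (EReal.coe_ne_top _)
      · have h2 : conjFn (ℓ t x) (fun y => -(α t x y * P' t + u' t.succ y)) = (r : EReal) := hc
        rw [h2]
        rw [hc, ← EReal.coe_add] at h1
        have h3 : u' t.castSucc x + r = γ' t.castSucc x := EReal.coe_eq_coe_iff.mp h1
        exact congrArg _ (by linarith)
    have hblk1 : ∀ (t : Fin T) (x : Fin n) (θ : ℝ) (v : Fin n → ℝ),
        (↑(θ * (u' t.castSucc x - γ' t.castSucc x)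
            + ∑ y, v y * -(α t x y * P' t + u' t.succ y)) : EReal)
          ≤ persp (ℓ t x) θ v := by
      intro t x θ v
      apply persp_ge (hbotℓ t x)
      rw [show -(u' t.castSucc x - γ' t.castSucc x)
          = γ' t.castSucc x - u' t.castSucc x from by ring]
      exact le_of_eq (hconj' t x)
    rw [hexp m1 w1 m2 D1 u' γ' P']
    have hS1 : (∑ s, ∑ x, m1 s x * (u' s x - γ' s x))
        = ∑ t : Fin T, ∑ x, m1 t.castSucc x * (u' t.castSucc x - γ' t.castSucc x) := by
      rw [Fin.sum_univ_castSucc (f := fun s : Fin (T+1) => ∑ x, m1 s x * (u' s x - γ' s x))]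
      have hlz : ∑ x, m1 (Fin.last T) x * (u' (Fin.last T) x - γ' (Fin.last T) x) = 0 :=
        Finset.sum_eq_zero fun x _ => by rw [hDP.2 x]; ring
      rw [hlz, add_zero]
    have hS12 : (∑ t : Fin T, ∑ x, m1 t.castSucc x * (u' t.castSucc x - γ' t.castSucc x))
        + (∑ t, ∑ x, ∑ y, w1 t x y * -(α t x y * P' t + u' t.succ y))
        = ∑ t : Fin T, ∑ x, (m1 t.castSucc x * (u' t.castSucc x - γ' t.castSucc x)
            + ∑ y, w1 t x y * -(α t x y * P' t + u' t.succ y)) := by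
      rw [← Finset.sum_add_distrib]
      exact Finset.sum_congr rfl fun t _ => by rw [← Finset.sum_add_distrib]
    rw [hS1, hS12, EReal.coe_add, EReal.coe_add]
    have hB1 : (↑(∑ t : Fin T, ∑ x, (m1 t.castSucc x * (u' t.castSucc x - γ' t.castSucc x)
            + ∑ y, w1 t x y * -(α t x y * P' t + u' t.succ y))) : EReal)
        ≤ ∑ t, ∑ x, persp (ℓ t x) (m1 t.castSucc x) (w1 t x) := by
      rw [ecoe_sum]; apply Finset.sum_le_sum; intro t _
      rw [ecoe_sum]; apply Finset.sum_le_sum; intro x _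
      exact hblk1 t x _ (w1 t x)
    have hB3 : (↑(∑ s, ∑ x, m2 s x * γ' s x) : EReal)
        ≤ (∑ s, F s (m2 s)) + ∑ s, conjFn (F s) (γ' s) := by
      rw [← Finset.sum_add_distrib, ecoe_sum]; apply Finset.sum_le_sum; intro s _
      exact ecoe_le_add_of_sub_le (hbotF s _) (conjFn_ne_bot (hpropF s) _)
        (conjFn_ge (F s) (γ' s) (m2 s))
    have hB4 : (↑(∑ t, D1 t * P' t) : EReal)
        ≤ (∑ t, φ t (D1 t)) + ∑ t, conjR (φ t) (P' t) := by
      rw [← Finset.sum_add_distrib, ecoe_sum]; apply Finset.sum_le_sum; intro t _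
      exact ecoe_le_add_of_sub_le (hbotφ t _) (conjR_ne_bot (hpropφ t) _)
        (conjR_ge (φ t) (P' t) (D1 t))
    refine le_trans (add_le_add (add_le_add hB1 hB3) hB4) (le_of_eq ?_)
    show (∑ t, ∑ x, persp (ℓ t x) (m1 t.castSucc x) (w1 t x))
        + ((∑ s, F s (m2 s)) + ∑ s, conjFn (F s) (γ' s))
        + ((∑ t, φ t (D1 t)) + ∑ t, conjR (φ t) (P' t))
      = (∑ t, ∑ x, persp (ℓ t x) (m1 t.castSucc x) (w1 t x)) + (∑ t, φ t (D1 t))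
        + (∑ s, F s (m2 s)) + (∑ t, conjR (φ t) (P' t)) + ∑ s, conjFn (F s) (γ' s)
    abel
  -- Fobj is never ⊥
  have hFnb : ∀ c : Csp T n, Fobj ℓ F φ c ≠ ⊥ := by
    intro c
    have hX : (∑ t, ∑ x, persp (ℓ t x) (c.1 t.castSucc x) (c.2.1 t x)) ≠ ⊥ :=
      esum_ne_bot fun t _ => esum_ne_bot fun x _ => persp_ne_bot (hbotℓ t x) _ _
    have hY : (∑ t, φ t (c.2.2.2 t)) ≠ ⊥ := esum_ne_bot fun t _ => hbotφ t _
    have hZ : (∑ s, F s (c.2.2.1 s)) ≠ ⊥ := esum_ne_bot fun s _ => hbotF s _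
    unfold Fobj
    simp [EReal.add_eq_bot_iff, hX, hY, hZ]
  -- candidate data
  have hmnn : ∀ s x, 0 ≤ m s x := kol_nonneg m0 hm0 π hπΔ m hKol
  have hA1c : ∀ s x, opS w s x - m s x = -(mbar0 m0 s x) := kol_opS hw hKol
  have hQD : ∀ t : Fin T, opA α w t = Qcpl α m π t := fun t =>
    Finset.sum_congr rfl fun x _ => Finset.sum_congr rfl fun y _ => by rw [hw t x y]
  have hpersp_c : ∀ (t : Fin T) (x : Fin n), persp (ℓ t x) (m t.castSucc x) (w t x)
      = ((m t.castSucc x * (u t.castSucc x - γ t.castSucc x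
          - ∑ y, π t x y * (α t x y * P t + u t.succ y)) : ℝ) : EReal) := by
    intro t x
    have hwsm : w t x = m t.castSucc x • π t x := funext fun y => by
      rw [hw t x y]; rfl
    rw [hwsm, persp_smul (ℓ t x) (hmnn t.castSucc x) (π t x), hLreal t x, ← EReal.coe_mul]
  have hFobj : Fobj ℓ F φ (m, w, m, D) = ((R : ℝ) : EReal) := by
    show (∑ t, ∑ x, persp (ℓ t x) (m t.castSucc x) (w t x)) + (∑ t, φ t (D t))
        + ∑ s, F s (m s) = ((R : ℝ) : EReal)
    have e1 : (∑ t, ∑ x, persp (ℓ t x) (m t.castSucc x) (w t x)) = ((RL : ℝ) : EReal) := by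
      rw [hRLdef, ecoe_sum]
      apply Finset.sum_congr rfl; intro t _
      rw [ecoe_sum]
      exact Finset.sum_congr rfl fun x _ => hpersp_c t x
    have e2 : (∑ t, φ t (D t)) = ((∑ t, qφ t : ℝ) : EReal) := by
      rw [ecoe_sum]
      exact Finset.sum_congr rfl fun t _ => by rw [hD t, hQD t]; exact (hqφ t).1
    have e3 : (∑ s, F s (m s)) = ((∑ s, fF s : ℝ) : EReal) := by
      rw [ecoe_sum]
      exact Finset.sum_congr rfl fun s _ => (hfF s).1
    rw [e1, e2, e3, ← EReal.coe_add, ← EReal.coe_add, hRdef]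
  -- primal lower bound (weak duality at the solution)
  have hprimal : ∀ c : Csp T n, ((R : ℝ) : EReal) ≤ PfrakObj ℓ F φ α m0 c := by
    intro c
    obtain ⟨m1, w1, m2, D1⟩ := c
    unfold PfrakObj
    by_cases hfeas : (∀ s x, (Aop α (m1, w1, m2, D1)).1 s x = -(mbar0 m0 s x))
        ∧ (Aop α (m1, w1, m2, D1)).2.1 = 0 ∧ (Aop α (m1, w1, m2, D1)).2.2 = 0
    · have hG : Gobj m0 (Aop α (m1, w1, m2, D1)) = 0 := by unfold Gobj; rw [if_pos hfeas]
      rw [hG, add_zero]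
      obtain ⟨hf1, hf2, hf3⟩ := hfeas
      have hm12 : ∀ s x, m1 s x = m2 s x := fun s x => by
        have h := congrFun (congrFun hf2 s) x
        have h' : m1 s x - m2 s x = 0 := h
        linarith
      have hD1 : ∀ t, opA α w1 t = D1 t := fun t => by
        have h := congrFun hf3 t
        have h' : opA α w1 t - D1 t = 0 := h
        linarith
      have h1 := master u γ P hIsDP (m1, w1, m2, D1)
      rw [hadj m1 w1 m2 D1 u γ P (fun s x => hf1 s x) hm12 hD1, hcq, hcf] at h1
      have h2 := ecoe_sub_le_of_le_add
        (Y := Fobj ℓ F φ (m1, w1, m2, D1) + ((A1 : ℝ) : EReal))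
        (by simp [EReal.add_eq_bot_iff, hFnb (m1, w1, m2, D1)]) h1
      have h3 := ecoe_sub_le_of_le_add (hFnb (m1, w1, m2, D1)) h2
      refine le_trans (le_of_eq (congrArg (fun r : ℝ => (r : EReal)) ?_)) h3
      rw [hRdef, hA1def, hA2def, ← hX0def]
      linarith [hSI, hsub1, hsub2, hcomm]
    · have hG : Gobj m0 (Aop α (m1, w1, m2, D1)) = ⊤ := by unfold Gobj; rw [if_neg hfeas]
      rw [hG, EReal.add_top_of_ne_bot (hFnb (m1, w1, m2, D1))]
      exact le_top
  have hPfrakc : PfrakObj ℓ F φ α m0 (m, w, m, D) = ((R : ℝ) : EReal) := by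
    unfold PfrakObj
    have hG : Gobj m0 (Aop α (m, w, m, D)) = 0 := by
      unfold Gobj
      rw [if_pos ⟨fun s x => hA1c s x,
        funext fun s => funext fun x => sub_self _,
        funext fun t => by show opA α w t - D t = 0; rw [hD t]; ring⟩]
    rw [hG, add_zero, hFobj]
  -- dual value at the candidate
  have hDfrakc : DfrakObj ℓ F φ α m0 (u, γ, P) = ((-R : ℝ) : EReal) := by
    unfold DfrakObj GobjStar
    have hle : FobjStar ℓ F φ (-AstarOp α (u, γ, P)) ≤ ((X0 - R : ℝ) : EReal) := by
      unfold FobjStar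
      apply iSup_le; intro c
      obtain ⟨m1, w1, m2, D1⟩ := c
      have h1 := master u γ P hIsDP (m1, w1, m2, D1)
      rw [hcq, hcf] at h1
      have h2 : (↑(cpair (m1, w1, m2, D1) (-AstarOp α (u, γ, P))) : EReal)
          ≤ Fobj ℓ F φ (m1, w1, m2, D1) + ((A1 + A2 : ℝ) : EReal) := by
        rw [EReal.coe_add, ← add_assoc]; exact h1
      have h3 := ecoe_sub_le_of_le_add' (hFnb (m1, w1, m2, D1)) h2
      refine le_trans h3 (le_of_eq (congrArg (fun r : ℝ => (r : EReal)) ?_))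
      rw [hRdef, hA1def, hA2def]
      linarith [hSI, hsub1, hsub2, hcomm]
    have hge : ((X0 - R : ℝ) : EReal) ≤ FobjStar ℓ F φ (-AstarOp α (u, γ, P)) := by
      unfold FobjStar
      have h1 := le_iSup (fun c : Csp T n =>
        (↑(cpair c (-AstarOp α (u, γ, P))) : EReal) - Fobj ℓ F φ c) (m, w, m, D)
      rw [hadj m w m D u γ P hA1c (fun _ _ => rfl) (fun t => (hD t).symm), hFobj,
        ← EReal.coe_sub] at h1
      rw [hX0def]
      exact h1
    rw [le_antisymm hle hge, ← hX0def, ← EReal.coe_add]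
    exact congrArg _ (by ring)
  have hdual_lb : ∀ k : Ksp T n, ((-R : ℝ) : EReal) ≤ DfrakObj ℓ F φ α m0 k := by
    intro k
    obtain ⟨u1, γ1, P1⟩ := k
    unfold DfrakObj GobjStar FobjStar
    have h1 := le_iSup (fun c : Csp T n =>
      (↑(cpair c (-AstarOp α (u1, γ1, P1))) : EReal) - Fobj ℓ F φ c) (m, w, m, D)
    rw [hadj m w m D u1 γ1 P1 hA1c (fun _ _ => rfl) (fun t => (hD t).symm), hFobj,
      ← EReal.coe_sub] at h1
    calc ((-R : ℝ) : EReal)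
        = ↑((∑ x, m0 x * u1 0 x - R) + -(∑ x, m0 x * u1 0 x)) := congrArg _ (by ring)
      _ = ↑(∑ x, m0 x * u1 0 x - R) + ↑(-(∑ x, m0 x * u1 0 x)) := EReal.coe_add _ _
      _ ≤ _ := add_le_add_left h1 _
  -- the (P̃) problem
  have hJtil_ge : ∀ (m1 : Msp T n) (w1 : Wsp T n),
      (∀ s x, opS w1 s x - m1 s x + mbar0 m0 s x = 0) →
      ((R : ℝ) : EReal) ≤ Jtil ℓ F φ α m1 w1 := by
    intro m1 w1 hfe
    have h1 := hprimal (m1, w1, m1, fun t => opA α w1 t)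
    unfold PfrakObj at h1
    have hG : Gobj m0 (Aop α (m1, w1, m1, fun t => opA α w1 t)) = 0 := by
      unfold Gobj
      rw [if_pos ⟨fun s x => by
          have := hfe s x
          show opS w1 s x - m1 s x = -(mbar0 m0 s x)
          linarith,
        funext fun s => funext fun x => sub_self _, funext fun t => sub_self _⟩]
    rw [hG, add_zero] at h1
    exact h1
  have hJtilc : Jtil ℓ F φ α m w = ((R : ℝ) : EReal) := by
    show (∑ t, ∑ x, persp (ℓ t x) (m t.castSucc x) (w t x)) + (∑ t, φ t (opA α w t))
        + ∑ s, F s (m s) = ((R : ℝ) : EReal)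
    rw [show (∑ t, φ t (opA α w t)) = ∑ t, φ t (D t) from
      Finset.sum_congr rfl fun t _ => by rw [hD t]]
    exact hFobj
  have hFeasPtc : FeasPt m0 (m, w) := fun s x => by
    have := hA1c s x
    show opS w s x - m s x + mbar0 m0 s x = 0
    linarith
  -- the (P) problem
  have hJpot_eq : ∀ (m' : Msp T n) (π' : Wsp T n), InDelta π' → IsKol m0 π' m' →
      Jpot ℓ F φ α m' π' = Jtil ℓ F φ α m' (fun t x y => m' t.castSucc x * π' t x y) := by
    intro m' π' hΔ' hK'
    have hnn := kol_nonneg m0 hm0 π' hΔ' m' hK'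
    unfold Jpot Jtil
    refine congrArg₂ (· + ·) (congrArg₂ (· + ·) ?_ ?_) rfl
    · apply Finset.sum_congr rfl; intro t _
      apply Finset.sum_congr rfl; intro x _
      have hww : ((fun t x y => m' t.castSucc x * π' t x y) t x : Fin n → ℝ)
          = m' t.castSucc x • π' t x := funext fun y => rfl
      rw [hww, persp_smul (ℓ t x) (hnn t.castSucc x) (π' t x)]
    · exact Finset.sum_congr rfl fun t _ => rfl
  have hJpotc : Jpot ℓ F φ α m π = ((R : ℝ) : EReal) := by
    rw [hJpot_eq m π hπΔ hKol]
    rw [show (fun t x y => m t.castSucc x * π t x y) = w from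
      funext fun t => funext fun x => funext fun y => (hw t x y).symm]
    exact hJtilc
  have hFeasPt_of : ∀ (m' : Msp T n) (π' : Wsp T n), IsKol m0 π' m' →
      ∀ s x, opS (fun t x y => m' t.castSucc x * π' t x y) s x - m' s x + mbar0 m0 s x = 0 := by
    intro m' π' hK' s x
    have := kol_opS (fun _ _ _ => rfl) hK' s x
    linarith
  -- the (D̃) problem
  have hDobjc : Dobj F φ m0 (u, γ, P) = ((R : ℝ) : EReal) := by
    show (↑(∑ x, m0 x * u 0 x) : EReal) - (∑ t, conjR (φ t) (P t))
        - ∑ s, conjFn (F s) (γ s) = ((R : ℝ) : EReal)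
    rw [hcq, hcf, ← hX0def, ← EReal.coe_sub, ← EReal.coe_sub]
    refine congrArg _ ?_
    rw [hRdef, hA1def, hA2def]
    linarith [hSI, hsub1, hsub2, hcomm]
  have hDobj_le : ∀ (γ' P' : _) (u' : Msp T n), IsDP ℓ α γ' P' u' →
      Dobj F φ m0 (u', γ', P') ≤ ((R : ℝ) : EReal) := by
    intro γ' P' u' hDP'
    have h1 := master u' γ' P' hDP' (m, w, m, D)
    rw [hadj m w m D u' γ' P' hA1c (fun _ _ => rfl) (fun t => (hD t).symm), hFobj] at h1
    show (↑(∑ x, m0 x * u' 0 x) : EReal) - (∑ t, conjR (φ t) (P' t))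
        - ∑ s, conjFn (F s) (γ' s) ≤ ((R : ℝ) : EReal)
    have hb1 : (∑ t, conjR (φ t) (P' t)) ≠ ⊥ :=
      esum_ne_bot fun t _ => conjR_ne_bot (hpropφ t) _
    have hb2 : (∑ s, conjFn (F s) (γ' s)) ≠ ⊥ :=
      esum_ne_bot fun s _ => conjFn_ne_bot (hpropF s) _
    rcases ereal_cases (∑ t, conjR (φ t) (P' t)) with hc1 | hc1 | ⟨a1, hc1⟩
    · exact absurd hc1 hb1
    · rw [hc1, EReal.sub_top, EReal.bot_sub]; exact bot_le
    · rcases ereal_cases (∑ s, conjFn (F s) (γ' s)) with hc2 | hc2 | ⟨a2, hc2⟩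
      · exact absurd hc2 hb2
      · rw [hc2, EReal.sub_top]; exact bot_le
      · rw [hc1, hc2] at h1 ⊢
        rw [← EReal.coe_sub, ← EReal.coe_sub]
        rw [← EReal.coe_add, ← EReal.coe_add] at h1
        have h2 : ∑ x, m0 x * u' 0 x ≤ R + a1 + a2 := by exact_mod_cast h1
        exact_mod_cast by linarith
  -- assemble all five statements
  refine ⟨?_, ?_, ?_, ?_, ?_⟩
  · intro c'
    rw [show PfrakObj ℓ F φ α m0 (m, w, m, D) = ((R : ℝ) : EReal) from hPfrakc]
    exact hprimal c'
  · intro k'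
    rw [show DfrakObj ℓ F φ α m0 (u, γ, P) = ((-R : ℝ) : EReal) from hDfrakc]
    exact hdual_lb k'
  · exact ⟨hFeasPtc, fun q hq => by
      rw [show Jtil ℓ F φ α (m, w).1 (m, w).2 = ((R : ℝ) : EReal) from hJtilc]
      exact hJtil_ge q.1 q.2 hq⟩
  · refine ⟨⟨hπΔ, hKol⟩, fun q hq => ?_⟩
    obtain ⟨hΔ', hK'⟩ := hq
    rw [show Jpot ℓ F φ α (m, π).1 (m, π).2 = ((R : ℝ) : EReal) from hJpotc,
      hJpot_eq q.1 q.2 hΔ' hK']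
    exact hJtil_ge q.1 _ (hFeasPt_of q.1 q.2 hK')
  · exact ⟨hIsDP, fun γ' P' u' hDP' => by
      rw [show Dobj F φ m0 (u, γ, P) = ((R : ℝ) : EReal) from hDobjc]
      exact hDobj_le γ' P' u' hDP'⟩


end
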